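/- arXiv:2001.05818 — 5 statements merged into one kernel-verified Lean document; each statement's English description precedes it below -/
import Mathlib

section
/- Let A, X, R be polynomials over ℂ with deg A ≥ 2 and deg X ≥ 1, and let d ≥ 1 be an integer such that A^{∘d} = X∘R. Then there exist an integer N with N ≤ ⌊log₂(deg X)⌋ and N ≤ d, and a polynomial R', such that A^{∘N} = X∘R' and R = R'∘A^{∘(d−N)}. -/
open Polynomial Finset

/-- The `k`-th compositional iterate `A^{∘k}` of a polynomial, with `A^{∘0} = X`. -/
noncomputable def polyIter (A : Polynomial ℂ) : ℕ → Polynomial ℂ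
  | 0 => Polynomial.X
  | k + 1 => A.comp (polyIter A k)

lemma polyIter_natDegree (A : Polynomial ℂ) :
    ∀ k, (polyIter A k).natDegree = A.natDegree ^ k
  | 0 => by simp [polyIter]
  | k + 1 => by
      rw [polyIter, natDegree_comp, polyIter_natDegree A k, pow_succ]; ring

lemma polyIter_succ_right (A : Polynomial ℂ) :
    ∀ k, polyIter A (k + 1) = (polyIter A k).comp A
  | 0 => by simp [polyIter]
  | k + 1 => by
      show A.comp (polyIter A (k+1)) = (A.comp (polyIter A k)).comp A
      rw [polyIter_succ_right A k, comp_assoc]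

lemma comp_right_cancel {P Q A : Polynomial ℂ} (hA : 1 ≤ A.natDegree)
    (h : P.comp A = Q.comp A) : P = Q := by
  by_contra hne
  have h0 : (P - Q).comp A = 0 := by rw [sub_comp, h, sub_self]
  rcases comp_eq_zero_iff.mp h0 with h1 | ⟨_, h2⟩
  · exact hne (sub_eq_zero.mp h1)
  · rw [h2] at hA; simp at hA


lemma arith_aux {m n d : ℕ} (hm : m ≠ 0) (hn : 2 ≤ n) (hlt : m < 2 ^ d)
    (hdvd : m ∣ n ^ d) : m ∣ n ^ (d - 1) := by
  have hn0 : n ≠ 0 := by omega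
  rw [← Nat.factorization_le_iff_dvd hm (pow_ne_zero _ hn0)]
  refine Finsupp.le_def.mpr fun p => ?_
  rw [Nat.factorization_pow]
  simp only [Finsupp.smul_apply, smul_eq_mul]
  by_contra hcon
  push_neg at hcon
  have hd2 : m.factorization p ≤ d * n.factorization p := by
    have h1 := (Nat.factorization_le_iff_dvd hm (pow_ne_zero _ hn0)).mpr hdvd
    have h2 := Finsupp.le_def.mp h1 p
    rwa [Nat.factorization_pow, Finsupp.smul_apply, smul_eq_mul] at h2
  have hp : p.Prime := by
    by_contra hp
    rw [Nat.factorization_eq_zero_of_not_prime m hp] at hcon; omega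
  have ha : 1 ≤ n.factorization p := by
    rcases Nat.eq_zero_or_pos (n.factorization p) with h0 | h
    · rw [h0, Nat.mul_zero] at hd2 hcon; omega
    · exact h
  have h2 : d ≤ m.factorization p := by
    have h1 : d - 1 ≤ (d - 1) * n.factorization p := Nat.le_mul_of_pos_right _ ha
    have := lt_of_le_of_lt h1 hcon
    omega
  have hfin : 2 ^ d ≤ m := by
    calc 2 ^ d ≤ 2 ^ m.factorization p := Nat.pow_le_pow_right (by norm_num) h2
    _ ≤ p ^ m.factorization p := Nat.pow_le_pow_left hp.two_le _
    _ ≤ m := Nat.ordProj_le p hm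
  omega


lemma step_exists {X W A R : Polynomial ℂ} (hX : 1 ≤ X.natDegree) (hA : 2 ≤ A.natDegree)
    (hdvd : A.natDegree ∣ R.natDegree) (h : X.comp R = W.comp A) :
    ∃ S : Polynomial ℂ, R = S.comp A := by
  suffices H : ∀ e : ℕ, ∀ S : Polynomial ℂ, (R - S.comp A).natDegree ≤ e →
      ∃ S' : Polynomial ℂ, R = S'.comp A from H (R - (0 : Polynomial ℂ).comp A).natDegree 0 le_rfl
  intro e
  induction e using Nat.strong_induction_on with
  | _ e IH =>
  intro S hSe
  set E := R - S.comp A with hEdef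
  by_cases hE0 : E = 0
  · exact ⟨S, by rw [← sub_eq_zero]; exact hE0⟩
  by_cases hEc : E.natDegree = 0
  · refine ⟨S + C (E.coeff 0), ?_⟩
    have hE : E = C (E.coeff 0) := eq_C_of_natDegree_eq_zero hEc
    rw [add_comp, C_comp, ← hE, hEdef]; ring
  have hA0 : A ≠ 0 := fun hz => by simp [hz] at hA
  have he1 : 1 ≤ E.natDegree := Nat.one_le_iff_ne_zero.mpr hEc
  set n := A.natDegree with hn
  by_cases hdivE : n ∣ E.natDegree
  · -- subtract the top term and recurse
    obtain ⟨j, hj⟩ := hdivE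
    set c := E.leadingCoeff / A.leadingCoeff ^ j with hc
    have hc0 : c ≠ 0 := by
      apply div_ne_zero (leadingCoeff_ne_zero.mpr hE0)
      exact pow_ne_zero _ (leadingCoeff_ne_zero.mpr hA0)
    set S2 := S + C c * Polynomial.X ^ j with hS2
    have hcomp : S2.comp A = S.comp A + C c * A ^ j := by
      rw [hS2, add_comp, mul_comp, C_comp, X_pow_comp]
    have hE2 : R - S2.comp A = E - C c * A ^ j := by
      rw [hcomp, hEdef]; ring
    have hdegCA : (C c * A ^ j).natDegree = E.natDegree := by
      rw [natDegree_C_mul hc0, natDegree_pow, hj, mul_comm]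
    have hlcCA : (C c * A ^ j).leadingCoeff = E.leadingCoeff := by
      rw [leadingCoeff_mul, leadingCoeff_C, leadingCoeff_pow, hc]
      exact div_mul_cancel₀ _ (pow_ne_zero _ (leadingCoeff_ne_zero.mpr hA0))
    have hsub : (R - S2.comp A).natDegree ≤ E.natDegree - 1 := by
      rcases eq_or_ne (R - S2.comp A) 0 with h0 | h0
      · simp [h0]
      · have hdd : (R - S2.comp A).degree < E.degree := by
          rw [hE2]
          exact degree_sub_lt (by rw [degree_eq_natDegree hE0,
            degree_eq_natDegree (fun hz => by rw [hz] at hdegCA; simp at hdegCA; omega),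
            hdegCA]) hE0 hlcCA.symm
        have := natDegree_lt_natDegree h0 hdd
        omega
    exact IH (E.natDegree - 1) (by omega) S2 hsub
  · -- contradiction case
    exfalso
    set L := X.natDegree with hL
    set B := S.comp A with hBdef
    set k := S.natDegree with hk
    have hBdeg : B.natDegree = k * n := natDegree_comp
    have hRS : R = B + E := by rw [hEdef]; ring
    have hEkn : E.natDegree < k * n := by
      rcases lt_trichotomy E.natDegree (k * n) with hlt | heq | hgt
      · exact hlt
      · exact absurd (heq ▸ dvd_mul_left n k) hdivE
      · have hR : R.natDegree = E.natDegree := by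
          rw [hRS, natDegree_add_eq_right_of_natDegree_lt (by rw [hBdeg]; exact hgt)]
        exact absurd (hR ▸ hdvd) hdivE
    have hRdeg : R.natDegree = k * n := by
      rw [hRS, natDegree_add_eq_left_of_natDegree_lt (by rw [hBdeg]; exact hEkn), hBdeg]
    have hkn1 : 1 ≤ k * n := by omega
    have hR0 : R ≠ 0 := fun hz => by rw [hz, natDegree_zero] at hRdeg; omega
    have hB0 : B ≠ 0 := fun hz => by rw [hz, natDegree_zero] at hBdeg; omega
    have hlcRB : R.leadingCoeff = B.leadingCoeff := by
      have h1 : R.coeff (k * n) = B.coeff (k * n) + E.coeff (k * n) := by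
        rw [hRS, coeff_add]
      rw [coeff_eq_zero_of_natDegree_lt hEkn, add_zero] at h1
      rw [← coeff_natDegree, hRdeg, h1, ← hBdeg, coeff_natDegree]
    set lam := B.leadingCoeff with hlam
    have hlam0 : lam ≠ 0 := leadingCoeff_ne_zero.mpr hB0
    set M := (L - 1) * (k * n) with hM
    set Q := ∑ i ∈ Finset.range (L + 1),
        C (X.coeff i) * ∑ t ∈ Finset.range i, R ^ t * B ^ (i - 1 - t) with hQdef
    have hcompsum : ∀ P : Polynomial ℂ,
        X.comp P = ∑ i ∈ Finset.range (L + 1), C (X.coeff i) * P ^ i := fun P =>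
      eval₂_eq_sum_range _ _
    have hfact : X.comp R - X.comp B = Q * (R - B) := by
      rw [hcompsum R, hcompsum B, ← Finset.sum_sub_distrib, hQdef, Finset.sum_mul]
      refine Finset.sum_congr rfl fun i _ => ?_
      rw [mul_assoc, geom_sum₂_mul]
      ring
    have hDQE : (W - X.comp S).comp A = Q * E := by
      rw [sub_comp, ← h, comp_assoc, ← hBdef, hfact, hEdef]
    -- coefficient of Q at M
    have hterm_lt : ∀ i ∈ Finset.range (L + 1),
        (C (X.coeff i) * ∑ t ∈ Finset.range i, R ^ t * B ^ (i - 1 - t)).natDegree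
          ≤ (i - 1) * (k * n) := by
      intro i hi
      refine (natDegree_C_mul_le _ _).trans ?_
      refine natDegree_sum_le_of_forall_le _ _ fun t ht => ?_
      refine natDegree_mul_le.trans ?_
      rw [natDegree_pow, natDegree_pow, hRdeg, hBdeg, ← add_mul]
      rw [Finset.mem_range] at ht
      exact Nat.mul_le_mul_right _ (by omega)
    have hQM : Q.coeff M = X.coeff L * (L : ℂ) * lam ^ (L - 1) := by
      rw [hQdef, finset_sum_coeff, Finset.sum_range_succ]
      have hzero : ∀ i ∈ Finset.range L,
          (C (X.coeff i) * ∑ t ∈ Finset.range i, R ^ t * B ^ (i - 1 - t)).coeff M = 0 := by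
        intro i hi
        rw [Finset.mem_range] at hi
        rcases Nat.eq_zero_or_pos i with rfl | hi1
        · simp
        · apply coeff_eq_zero_of_natDegree_lt
          refine lt_of_le_of_lt (hterm_lt i (by rw [Finset.mem_range]; omega)) ?_
          rw [hM]
          have h1 : i - 1 < L - 1 := by omega
          exact (Nat.mul_lt_mul_right (show 0 < k * n by omega)).mpr h1
      rw [Finset.sum_eq_zero hzero, zero_add, coeff_C_mul, finset_sum_coeff]
      have hterm : ∀ t ∈ Finset.range L,
          (R ^ t * B ^ (L - 1 - t)).coeff M = lam ^ (L - 1) := by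
        intro t ht
        rw [Finset.mem_range] at ht
        have hdeg : (R ^ t * B ^ (L - 1 - t)).natDegree = M := by
          rw [natDegree_mul (pow_ne_zero _ hR0) (pow_ne_zero _ hB0), natDegree_pow,
            natDegree_pow, hRdeg, hBdeg, ← add_mul, hM]
          congr 1
          omega
        rw [← hdeg, coeff_natDegree, leadingCoeff_mul, leadingCoeff_pow, leadingCoeff_pow,
          hlcRB, ← hlam, ← pow_add]
        congr 1
        omega
      rw [Finset.sum_congr rfl hterm, Finset.sum_const, Finset.card_range, nsmul_eq_mul]
      ring
    have hXL : X.coeff L ≠ 0 := by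
      rw [hL, coeff_natDegree]
      refine leadingCoeff_ne_zero.mpr (fun hz => ?_)
      rw [hL, hz, natDegree_zero] at hX
      omega
    have hQM0 : Q.coeff M ≠ 0 := by
      rw [hQM]
      exact mul_ne_zero (mul_ne_zero hXL (Nat.cast_ne_zero.mpr (by omega))) (pow_ne_zero _ hlam0)
    have hQ0 : Q ≠ 0 := fun hz => hQM0 (by rw [hz, coeff_zero])
    have hQle : Q.natDegree ≤ M := by
      rw [hQdef]
      refine natDegree_sum_le_of_forall_le _ _ fun i hi => ?_
      refine (hterm_lt i hi).trans ?_
      rw [Finset.mem_range] at hi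
      rw [hM]
      exact Nat.mul_le_mul_right _ (by omega)
    have hQdeg : Q.natDegree = M := le_antisymm hQle (le_natDegree_of_ne_zero hQM0)
    -- conclude
    set T := W - X.comp S with hT
    have hTA0 : T.comp A ≠ 0 := by rw [hDQE]; exact mul_ne_zero hQ0 hE0
    have hT0 : T ≠ 0 := fun hz => hTA0 (by rw [hz, zero_comp])
    have hdvdTA : n ∣ (T.comp A).natDegree := by
      rw [natDegree_comp]
      exact dvd_mul_left A.natDegree T.natDegree
    rw [hDQE, natDegree_mul hQ0 hE0, hQdeg] at hdvdTA
    have hnM : n ∣ M := ⟨(L - 1) * k, by rw [hM]; ring⟩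
    exact hdivE ((Nat.dvd_add_right hnM).mp hdvdTA)

lemma step_one {X W A R : Polynomial ℂ} (hX : 1 ≤ X.natDegree) (hA : 2 ≤ A.natDegree)
    (hdvd : A.natDegree ∣ R.natDegree) (h : X.comp R = W.comp A) :
    ∃ S : Polynomial ℂ, R = S.comp A ∧ W = X.comp S := by
  obtain ⟨S, hS⟩ := step_exists hX hA hdvd h
  refine ⟨S, hS, ?_⟩
  apply comp_right_cancel (show 1 ≤ A.natDegree by omega)
  rw [← h, hS, comp_assoc]

lemma main_aux (A X : Polynomial ℂ) (hA : 2 ≤ A.natDegree) (hX : 1 ≤ X.natDegree) :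
    ∀ d, 1 ≤ d → ∀ R, polyIter A d = X.comp R →
    ∃ (N : ℕ) (R' : Polynomial ℂ), N ≤ Nat.log 2 X.natDegree ∧ N ≤ d ∧
      polyIter A N = X.comp R' ∧ R = R'.comp (polyIter A (d - N)) := by
  intro d
  induction d using Nat.strong_induction_on with
  | _ d IH =>
  intro hd R h
  by_cases hcase : d ≤ Nat.log 2 X.natDegree
  · refine ⟨d, R, hcase, le_rfl, h, ?_⟩
    rw [Nat.sub_self]
    show R = R.comp Polynomial.X
    rw [comp_X]
  · push_neg at hcase
    have hm0 : X.natDegree ≠ 0 := by omega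
    have hmlt : X.natDegree < 2 ^ d := (Nat.log_lt_iff_lt_pow one_lt_two hm0).mp hcase
    have hdeg : X.natDegree * R.natDegree = A.natDegree ^ d := by
      have h2 := congrArg natDegree h
      rw [polyIter_natDegree, natDegree_comp] at h2
      omega
    have hdvdd : X.natDegree ∣ A.natDegree ^ d := ⟨R.natDegree, hdeg.symm⟩
    obtain ⟨q, hq⟩ := arith_aux hm0 hA hmlt hdvdd
    have hnR : A.natDegree ∣ R.natDegree := by
      refine ⟨q, ?_⟩
      have hd1 : A.natDegree ^ d = A.natDegree * A.natDegree ^ (d - 1) := by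
        rw [← pow_succ']
        congr 1
        omega
      have h3 : X.natDegree * R.natDegree = X.natDegree * (A.natDegree * q) := by
        rw [hdeg, hd1, hq]; ring
      exact Nat.eq_of_mul_eq_mul_left (by omega) h3
    have hstep : X.comp R = (polyIter A (d - 1)).comp A := by
      rw [← polyIter_succ_right, show d - 1 + 1 = d from by omega, h]
    obtain ⟨S, hRS, hWS⟩ := step_one hX hA hnR hstep
    rcases Nat.eq_zero_or_pos (d - 1) with h0 | h1
    · have hd1 : d = 1 := by omega
      refine ⟨0, S, Nat.zero_le _, Nat.zero_le _, ?_, ?_⟩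
      · rw [← h0]
        exact hWS
      · rw [Nat.sub_zero, hd1]
        show R = S.comp (A.comp (polyIter A 0))
        show R = S.comp (A.comp Polynomial.X)
        rw [comp_X]
        exact hRS
    · obtain ⟨N, R'', hN1, hN2, hXR, hSR⟩ := IH (d - 1) (by omega) h1 S hWS
      refine ⟨N, R'', hN1, by omega, hXR, ?_⟩
      rw [hRS, hSR, comp_assoc, ← polyIter_succ_right,
        show d - 1 - N + 1 = d - N from by omega]


theorem iterate_left_factor_bounded
    (A X R : Polynomial ℂ) (hA : 2 ≤ A.natDegree) (hX : 1 ≤ X.natDegree)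
    (d : ℕ) (hd : 1 ≤ d) (h : polyIter A d = X.comp R) :
    ∃ (N : ℕ) (R' : Polynomial ℂ), N ≤ Nat.log 2 X.natDegree ∧ N ≤ d ∧
      polyIter A N = X.comp R' ∧ R = R'.comp (polyIter A (d - N)) :=
  main_aux A X hA hX d hd R h
end

section
/- Let A, f, g be nonconstant polynomials over ℂ such that A∘f = A∘g. Then there exists a polynomial μ of degree one such that A∘μ = A and f = μ∘g. -/
open Polynomial

private lemma comp_right_cancel' {p q g : Polynomial ℂ} (hg : g.natDegree ≠ 0)
    (h : p.comp g = q.comp g) : p = q := by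
  by_contra hne
  have h0 : (p - q).comp g = 0 := by rw [sub_comp, h, sub_self]
  have h1 := Polynomial.leadingCoeff_comp (p := p - q) hg
  rw [h0, leadingCoeff_zero] at h1
  have hg0 : g ≠ 0 := fun hh => hg (by simp [hh])
  rcases mul_eq_zero.mp h1.symm with h2 | h2
  · exact hne (sub_eq_zero.mp (leadingCoeff_eq_zero.mp h2))
  · exact hg0 (leadingCoeff_eq_zero.mp ((pow_eq_zero_iff' (M₀ := ℂ)).mp h2).1)

theorem comp_cancel_of_polynomials
    (A f g : Polynomial ℂ) (hA : 1 ≤ A.natDegree) (hf : 1 ≤ f.natDegree)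
    (hg : 1 ≤ g.natDegree) (h : A.comp f = A.comp g) :
    ∃ μ : Polynomial ℂ, μ.degree = 1 ∧ A.comp μ = A ∧ f = μ.comp g := by
  set n := A.natDegree with hn
  set m := g.natDegree with hm
  have hfne : f.natDegree ≠ 0 := by omega
  have hgne : m ≠ 0 := by omega
  -- degrees coincide
  have hdeg : f.natDegree = m := by
    have := congrArg Polynomial.natDegree h
    rw [natDegree_comp, natDegree_comp] at this
    exact Nat.eq_of_mul_eq_mul_left (by omega) this
  have hA0 : A ≠ 0 := fun hh => by rw [hh] at hn; simp at hn; omega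
  have hf0 : f ≠ 0 := fun hh => hfne (by rw [hh]; exact natDegree_zero)
  have hg0 : g ≠ 0 := fun hh => hgne (by rw [hm, hh]; exact natDegree_zero)
  have hLA : A.leadingCoeff ≠ 0 := leadingCoeff_ne_zero.mpr hA0
  have ha : f.leadingCoeff ≠ 0 := leadingCoeff_ne_zero.mpr hf0
  have hb : g.leadingCoeff ≠ 0 := leadingCoeff_ne_zero.mpr hg0
  set a := f.leadingCoeff
  set b := g.leadingCoeff
  set lam : ℂ := a / b with hlam
  have hlc : a ^ n = b ^ n := by
    have h1 := Polynomial.leadingCoeff_comp (p := A) hfne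
    have h2 := Polynomial.leadingCoeff_comp (p := A) hgne
    rw [h] at h1
    rw [h1] at h2
    exact mul_left_cancel₀ hLA h2
  have hlam0 : lam ≠ 0 := div_ne_zero ha hb
  have hlamn : lam ^ n = 1 := by
    rw [hlam, div_pow, hlc, div_self (pow_ne_zero _ hb)]
  set r : Polynomial ℂ := f - C lam * g with hr
  have hfr : f = C lam * g + r := by ring
  have hrm : r.natDegree < m := by
    rcases eq_or_ne r 0 with h0 | h0
    · rw [h0]; simpa using (by omega : 0 < m)
    · have hle : r.natDegree ≤ m := by
        apply le_trans (natDegree_sub_le _ _)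
        simp only [max_le_iff]
        constructor
        · exact le_of_eq hdeg
        · exact le_trans (natDegree_mul_le) (by simp [hm])
      have hcm : r.coeff m = 0 := by
        rw [hr]
        simp only [coeff_sub, coeff_C_mul]
        have e1 : f.coeff m = a := by rw [← hdeg]; rfl
        have e2 : g.coeff m = b := rfl
        rw [e1, e2, hlam]
        field_simp
        simp
      rcases lt_or_eq_of_le hle with h1 | h1
      · exact h1
      · exfalso
        have : r.coeff r.natDegree ≠ 0 := by
          rw [← leadingCoeff]; exact leadingCoeff_ne_zero.mpr h0
        rw [h1, hcm] at this; exact this rfl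
  -- r is constant
  have hrconst : r.natDegree = 0 := by
    by_contra hd0
    set d := r.natDegree with hd
    have hd1 : 1 ≤ d := by omega
    have hrne : r ≠ 0 := fun hh => hd0 (by rw [hd, hh]; exact natDegree_zero)
    set N : ℕ := (n - 1) * m + d with hN
    have hNgt : (n - 1) * m < N := by omega
    have key : ∀ p : Polynomial ℂ, p.natDegree = m →
        (A.comp p).coeff N = A.leadingCoeff * (p ^ n).coeff N := by
      intro p hp
      conv_lhs => rw [← A.eraseLead_add_C_mul_X_pow]
      rw [add_comp, mul_comp, C_comp, X_pow_comp, coeff_add, coeff_C_mul]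
      have hz : (A.eraseLead.comp p).coeff N = 0 := by
        apply coeff_eq_zero_of_natDegree_lt
        calc (A.eraseLead.comp p).natDegree
            ≤ A.eraseLead.natDegree * p.natDegree := natDegree_comp_le
          _ ≤ (n - 1) * m := Nat.mul_le_mul (A.eraseLead_natDegree_le) (le_of_eq hp)
          _ < N := hNgt
      rw [hz, zero_add]
    have hmain : (f ^ n).coeff N = (g ^ n).coeff N := by
      have h1 := key f hdeg
      have h2 := key g rfl
      rw [h] at h1
      rw [h1] at h2
      exact mul_left_cancel₀ hLA h2
    obtain ⟨k, hk⟩ : ∃ k, n = k + 1 := ⟨n - 1, by omega⟩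
    rw [hk] at hmain hlamn
    have hNk : N = k * m + d := by rw [hN, hk]; simp
    have hfn : (f ^ (k+1)).coeff N
        = ∑ j ∈ Finset.range (k+2),
            ((C lam * g) ^ j * r ^ (k+1-j) * ((k+1).choose j : ℂ[X])).coeff N := by
      rw [hfr, add_pow, finset_sum_coeff]
    have hvan : ∀ j ∈ Finset.range k,
        ((C lam * g) ^ j * r ^ (k+1-j) * ((k+1).choose j : ℂ[X])).coeff N = 0 := by
      intro j hj
      rw [Finset.mem_range] at hj
      apply coeff_eq_zero_of_natDegree_lt
      obtain ⟨t, rfl⟩ : ∃ t, k = j + t + 1 := ⟨k - j - 1, by omega⟩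
      have hlt : j * m + (t + 2) * d < N := by
        have h1 : (t + 1) * d < (t + 1) * m :=
          mul_lt_mul_of_pos_left hrm (Nat.succ_pos t)
        have hNk' : N = (j + t + 1) * m + d := hNk
        nlinarith [h1, hNk']
      calc ((C lam * g) ^ j * r ^ (j+t+1+1-j) * (((j+t+1+1).choose j : ℕ) : ℂ[X])).natDegree
          ≤ ((C lam * g) ^ j * r ^ (j+t+1+1-j)).natDegree
            + (((((j+t+1+1).choose j : ℕ)) : ℂ[X])).natDegree := natDegree_mul_le
        _ ≤ ((C lam * g) ^ j).natDegree + (r ^ (j+t+1+1-j)).natDegree + 0 := by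
            gcongr
            · exact natDegree_mul_le
            · exact le_of_eq (natDegree_natCast _)
        _ ≤ j * (C lam * g).natDegree + (j+t+1+1-j) * r.natDegree + 0 := by
            gcongr <;> exact natDegree_pow_le
        _ ≤ j * m + (t + 2) * d := by
            have : (C lam * g).natDegree ≤ m := le_trans natDegree_mul_le (by simp [hm])
            have h2 : j+t+1+1-j = t+2 := by omega
            rw [h2]
            simp only [add_zero]
            gcongr
        _ < N := hlt
    have hterm_k : ((C lam * g) ^ k * r ^ (k+1-k) * (((k+1).choose k : ℕ) : ℂ[X])).coeff N
        = lam ^ k * (k+1 : ℂ) * (b ^ k * r.leadingCoeff) := by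
      have h1 : k + 1 - k = 1 := by omega
      have h2 : (k+1).choose k = k + 1 := by simp
      rw [h1, h2, pow_one, mul_pow, ← C_pow, ← C_eq_natCast]
      have h3 : (g ^ k).natDegree = k * m := by rw [natDegree_pow]
      have h4 : (g ^ k * r).coeff N = b ^ k * r.leadingCoeff := by
        have hcm := coeff_mul_degree_add_degree (g ^ k) r
        rw [h3, leadingCoeff_pow] at hcm
        rw [hNk]; exact hcm
      have e : C (lam ^ k) * g ^ k * r * C ((k + 1 : ℕ) : ℂ)
          = C (lam ^ k) * (C ((k + 1 : ℕ) : ℂ) * (g ^ k * r)) := by ring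
      rw [e, coeff_C_mul, coeff_C_mul, h4]
      push_cast
      ring
    have hterm_top : ((C lam * g) ^ (k+1) * r ^ (k+1-(k+1)) * (((k+1).choose (k+1) : ℕ) : ℂ[X])).coeff N
        = (g ^ (k+1)).coeff N := by
      simp only [Nat.sub_self, pow_zero, Nat.choose_self, Nat.cast_one, mul_one]
      rw [mul_pow, ← C_pow, hlamn, C_1, one_mul]
    have hsum : (f ^ (k+1)).coeff N
        = lam ^ k * (k+1 : ℂ) * (b ^ k * r.leadingCoeff) + (g ^ (k+1)).coeff N := by
      rw [hfn, Finset.sum_range_succ, Finset.sum_range_succ,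
        Finset.sum_eq_zero hvan, zero_add, hterm_k, hterm_top]
    rw [hmain] at hsum
    have hzero : lam ^ k * (k+1 : ℂ) * (b ^ k * r.leadingCoeff) = 0 := by
      have h5 := hsum.symm
      rwa [add_eq_right] at h5
    have : r.leadingCoeff ≠ 0 := leadingCoeff_ne_zero.mpr hrne
    have hk1 : ((k : ℂ) + 1) ≠ 0 := by
      have : ((k : ℂ) + 1) = ((k+1 : ℕ) : ℂ) := by push_cast; ring
      rw [this]; exact Nat.cast_ne_zero.mpr (by omega)
    exact (mul_ne_zero (mul_ne_zero (pow_ne_zero _ hlam0) hk1)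
      (mul_ne_zero (pow_ne_zero _ hb) this)) hzero
  obtain ⟨c, hc⟩ := natDegree_eq_zero.mp hrconst
  have hmu : (C lam * X + C c).comp g = f := by
    rw [add_comp, mul_comp, C_comp, X_comp, C_comp, hfr, hc]
  refine ⟨C lam * X + C c, degree_linear hlam0, ?_, hmu.symm⟩
  apply comp_right_cancel' hgne
  rw [comp_assoc, hmu, h]
end

section
/- Let A, C, D, B be nonconstant polynomials over ℂ such that A∘C = D∘B and deg D divides deg A. Then there exists a polynomial R over ℂ such that A = D∘R and B = R∘C. -/
open Polynomial Finset

noncomputable def auxG (D P Q : Polynomial ℂ) : Polynomial ℂ :=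
  ∑ i ∈ Finset.range (D.natDegree + 1),
    Polynomial.C (D.coeff i) * ∑ j ∈ Finset.range i, P ^ j * Q ^ (i - 1 - j)

lemma comp_sub_comp (D P Q : Polynomial ℂ) :
    D.comp P - D.comp Q = (P - Q) * auxG D P Q := by
  rw [auxG, Finset.mul_sum, Polynomial.comp, Polynomial.comp,
    Polynomial.eval₂_eq_sum_range, Polynomial.eval₂_eq_sum_range, ← Finset.sum_sub_distrib]
  refine Finset.sum_congr rfl fun i _ => ?_
  rw [← mul_sub, ← geom_sum₂_mul]
  ring

lemma auxG_degree_le (D P Q : Polynomial ℂ) (n : ℕ)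
    (hP : P.degree ≤ (n : WithBot ℕ)) (hQ : Q.degree ≤ (n : WithBot ℕ)) :
    (auxG D P Q).degree ≤ (((D.natDegree - 1) * n : ℕ) : WithBot ℕ) := by
  refine (Polynomial.degree_sum_le _ _).trans ?_
  rw [Finset.sup_le_iff]
  intro i hi
  simp only [Finset.mem_range] at hi
  have h0 : Polynomial.degree (Polynomial.C (D.coeff i)) ≤ (0 : WithBot ℕ) :=
    Polynomial.degree_C_le
  refine (Polynomial.degree_mul_le_of_le h0 ((Polynomial.degree_sum_le _ _).trans ?_)).trans
    (by rw [zero_add])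
  rw [Finset.sup_le_iff]
  intro j hj
  simp only [Finset.mem_range] at hj
  have := Polynomial.degree_mul_le_of_le (Polynomial.degree_pow_le_of_le j hP)
    (Polynomial.degree_pow_le_of_le (i - 1 - j) hQ)
  refine this.trans ?_
  have harith : j * n + (i - 1 - j) * n ≤ (D.natDegree - 1) * n := by
    have : j + (i - 1 - j) ≤ D.natDegree - 1 := by omega
    calc j * n + (i - 1 - j) * n = (j + (i - 1 - j)) * n := by ring
    _ ≤ (D.natDegree - 1) * n := Nat.mul_le_mul_right n this
  calc (j : WithBot ℕ) * n + ((i - 1 - j : ℕ) : WithBot ℕ) * n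
      = ((j * n + (i - 1 - j) * n : ℕ) : WithBot ℕ) := by push_cast; ring
    _ ≤ _ := by exact_mod_cast harith

lemma auxG_coeff (D P Q : Polynomial ℂ) (n : ℕ) (hn : 1 ≤ n) (hd : 1 ≤ D.natDegree) (β : ℂ)
    (hP : P.natDegree = n) (hQ : Q.natDegree = n)
    (hPl : P.leadingCoeff = β) (hQl : Q.leadingCoeff = β)
    (hP0 : P ≠ 0) (hQ0 : Q ≠ 0) :
    (auxG D P Q).coeff ((D.natDegree - 1) * n) =
      D.leadingCoeff * D.natDegree * β ^ (D.natDegree - 1) := by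
  set d := D.natDegree with hdd
  have key : ∀ i < d + 1, ∀ j < i, (P ^ j * Q ^ (i - 1 - j)).coeff ((d - 1) * n) =
      if i = d then β ^ (d - 1) else 0 := by
    intro i hi j hj
    have hdeg : (P ^ j * Q ^ (i - 1 - j)).natDegree = (i - 1) * n := by
      rw [Polynomial.natDegree_mul (pow_ne_zero _ hP0) (pow_ne_zero _ hQ0),
        Polynomial.natDegree_pow, Polynomial.natDegree_pow, hP, hQ]
      have : j + (i - 1 - j) = i - 1 := by omega
      calc j * n + (i - 1 - j) * n = (j + (i - 1 - j)) * n := by ring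
        _ = (i - 1) * n := by rw [this]
    by_cases hie : i = d
    · rw [if_pos hie]
      have hdeg' : (P ^ j * Q ^ (i - 1 - j)).natDegree = (d - 1) * n := by
        rw [hdeg, hie]
      have hcl : (P ^ j * Q ^ (i - 1 - j)).coeff ((d - 1) * n) =
          (P ^ j * Q ^ (i - 1 - j)).leadingCoeff := by
        rw [Polynomial.leadingCoeff, hdeg']
      rw [hcl, Polynomial.leadingCoeff_mul, Polynomial.leadingCoeff_pow,
        Polynomial.leadingCoeff_pow, hPl, hQl, ← pow_add]
      congr 1
      omega
    · simp only [if_neg hie]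
      apply Polynomial.coeff_eq_zero_of_natDegree_lt
      rw [hdeg]
      have : i - 1 < d - 1 := by omega
      exact Nat.mul_lt_mul_of_lt_of_le this (le_refl n) hn
  rw [auxG, Polynomial.finset_sum_coeff]
  rw [Finset.sum_range_succ]
  have h1 : ∀ i ∈ Finset.range d,
      (Polynomial.C (D.coeff i) * ∑ j ∈ Finset.range i, P ^ j * Q ^ (i - 1 - j)).coeff
        ((d - 1) * n) = 0 := by
    intro i hi
    simp only [Finset.mem_range] at hi
    rw [Polynomial.coeff_C_mul, Polynomial.finset_sum_coeff]
    have : ∀ j ∈ Finset.range i, (P ^ j * Q ^ (i - 1 - j)).coeff ((d - 1) * n) = 0 := by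
      intro j hj
      simp only [Finset.mem_range] at hj
      have := key i (by omega) j hj
      simpa [Nat.ne_of_lt hi] using this
    rw [Finset.sum_congr rfl this]
    simp
  rw [Finset.sum_congr rfl h1, Finset.sum_const_zero, zero_add,
    Polynomial.coeff_C_mul, Polynomial.finset_sum_coeff]
  have h2 : ∀ j ∈ Finset.range d, (P ^ j * Q ^ (d - 1 - j)).coeff ((d - 1) * n) =
      β ^ (d - 1) := by
    intro j hj
    simp only [Finset.mem_range] at hj
    simpa using key d (by omega) j hj
  rw [Finset.sum_congr rfl h2, Finset.sum_const, Finset.card_range]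
  rw [Polynomial.leadingCoeff]
  -- push_cast (unneeded)
  ring

lemma approx_root (D A : Polynomial ℂ) (k : ℕ) (hk : 1 ≤ k)
    (hd : 1 ≤ D.natDegree) (hA0 : A ≠ 0) (ρ : ℂ)
    (hρ : D.leadingCoeff * ρ ^ D.natDegree = A.leadingCoeff)
    (hAd : A.natDegree = D.natDegree * k) :
    ∀ j, j ≤ k → ∃ R : Polynomial ℂ, R.natDegree = k ∧ R.leadingCoeff = ρ ∧
      (A - D.comp R).degree < ((D.natDegree * k - j : ℕ) : WithBot ℕ) := by
  set d := D.natDegree with hdd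
  have hρ0 : ρ ≠ 0 := by
    intro h0
    rw [h0, zero_pow (by omega), mul_zero] at hρ
    exact hA0 (Polynomial.leadingCoeff_eq_zero.mp hρ.symm)
  have hD0 : D ≠ 0 := fun h0 => by rw [h0, Polynomial.natDegree_zero] at hdd; omega
  intro j
  induction j with
  | zero =>
    intro _
    refine ⟨Polynomial.C ρ * Polynomial.X ^ k, ?_, ?_, ?_⟩
    · rw [Polynomial.natDegree_C_mul_X_pow k ρ hρ0]
    · rw [Polynomial.C_mul_X_pow_eq_monomial, Polynomial.leadingCoeff_monomial]
    · have hR : (Polynomial.C ρ * Polynomial.X ^ k : Polynomial ℂ).natDegree = k :=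
        Polynomial.natDegree_C_mul_X_pow k ρ hρ0
      have hcomp_deg : (D.comp (Polynomial.C ρ * Polynomial.X ^ k)).natDegree = d * k := by
        rw [Polynomial.natDegree_comp, hR]
      have hlc : (D.comp (Polynomial.C ρ * Polynomial.X ^ k)).leadingCoeff = A.leadingCoeff := by
        rw [Polynomial.leadingCoeff_comp (by rw [hR]; omega),
          Polynomial.C_mul_X_pow_eq_monomial, Polynomial.leadingCoeff_monomial, ← hρ, hdd]
      have hcomp0 : D.comp (Polynomial.C ρ * Polynomial.X ^ k) ≠ 0 := by
        intro h0
        rw [h0, Polynomial.leadingCoeff_zero] at hlc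
        exact hA0 (Polynomial.leadingCoeff_eq_zero.mp hlc.symm)
      have hdegeq : A.degree = (D.comp (Polynomial.C ρ * Polynomial.X ^ k)).degree := by
        rw [Polynomial.degree_eq_natDegree hA0, Polynomial.degree_eq_natDegree hcomp0,
          hcomp_deg, hAd]
      have := Polynomial.degree_sub_lt hdegeq hA0 hlc.symm
      rw [Polynomial.degree_eq_natDegree hA0, hAd] at this
      simpa using this
  | succ j ih =>
    intro hj1
    obtain ⟨R, hRdeg, hRlc, hRlt⟩ := ih (by omega)
    have hR0 : R ≠ 0 := fun h0 => by rw [h0, Polynomial.leadingCoeff_zero] at hRlc; exact hρ0 hRlc.symm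
    set m := k - (j + 1) with hm
    set N := (d - 1) * k with hN
    set lG : ℂ := D.leadingCoeff * d * ρ ^ (d - 1) with hlG
    have hlG0 : lG ≠ 0 := by
      rw [hlG]
      refine mul_ne_zero (mul_ne_zero (Polynomial.leadingCoeff_ne_zero.mpr hD0) ?_)
        (pow_ne_zero _ hρ0)
      exact Nat.cast_ne_zero.mpr (by omega)
    set c0 : ℂ := (A - D.comp R).coeff (d * k - (j + 1)) with hc0
    set t : ℂ := c0 / lG with ht
    set R' := R + Polynomial.C t * Polynomial.X ^ m with hR'
    have hkdk : k ≤ d * k := Nat.le_mul_of_pos_left k (by omega)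
    have hsmall : (Polynomial.C t * Polynomial.X ^ m : Polynomial ℂ).degree < R.degree := by
      refine lt_of_le_of_lt (Polynomial.degree_C_mul_X_pow_le m t) ?_
      rw [Polynomial.degree_eq_natDegree hR0, hRdeg]
      exact_mod_cast (by omega : m < k)
    have hR'degeq : R'.degree = R.degree := by
      rw [hR']; exact Polynomial.degree_add_eq_left_of_degree_lt hsmall
    have hR'deg : R'.natDegree = k := by
      rw [Polynomial.natDegree_eq_of_degree_eq hR'degeq, hRdeg]
    have hR'lc : R'.leadingCoeff = ρ := by
      rw [hR', add_comm, Polynomial.leadingCoeff_add_of_degree_lt hsmall, hRlc]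
    have hR'0 : R' ≠ 0 := fun h0 => by
      rw [h0, Polynomial.leadingCoeff_zero] at hR'lc; exact hρ0 hR'lc.symm
    refine ⟨R', hR'deg, hR'lc, ?_⟩
    have hfact : D.comp R' - D.comp R = (Polynomial.C t * Polynomial.X ^ m) * auxG D R' R := by
      rw [comp_sub_comp, hR']; ring_nf
    have hGc : (auxG D R' R).coeff N = lG := by
      rw [hN, hlG]
      exact auxG_coeff D R' R k hk hd ρ hR'deg hRdeg hR'lc hRlc hR'0 hR0
    have hGdeg : (auxG D R' R).degree ≤ (N : WithBot ℕ) := by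
      rw [hN]
      exact auxG_degree_le D R' R k
        (by rw [Polynomial.degree_eq_natDegree hR'0, hR'deg])
        (by rw [Polynomial.degree_eq_natDegree hR0, hRdeg])
    have hmN : m + N = d * k - (j + 1) := by
      rw [hm, hN, Nat.sub_mul, one_mul]
      omega
    have hEeq : A - D.comp R' = (A - D.comp R) - (Polynomial.C t * Polynomial.X ^ m) * auxG D R' R := by
      rw [← hfact]; ring
    rw [hEeq, Polynomial.degree_lt_iff_coeff_zero]
    intro m' hm'
    have hm'' : d * k - (j + 1) ≤ m' := by exact_mod_cast hm'
    rw [Polynomial.coeff_sub]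
    by_cases hcase : m' = d * k - (j + 1)
    · subst hcase
      have hterm : ((Polynomial.C t * Polynomial.X ^ m) * auxG D R' R).coeff (d * k - (j + 1)) = t * lG := by
        rw [← hmN, mul_assoc, Polynomial.coeff_C_mul, add_comm m N,
          Polynomial.coeff_X_pow_mul (auxG D R' R) m N, hGc]
      rw [hterm, ht, div_mul_cancel₀ _ hlG0, ← hc0, sub_self]
    · have hgt : (d * k - (j + 1) : ℕ) < m' := by omega
      have h1 : (A - D.comp R).coeff m' = 0 := by
        apply Polynomial.coeff_eq_zero_of_degree_lt
        refine lt_of_lt_of_le hRlt ?_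
        exact_mod_cast (by omega : d * k - j ≤ m')
      have h2 : ((Polynomial.C t * Polynomial.X ^ m) * auxG D R' R).coeff m' = 0 := by
        apply Polynomial.coeff_eq_zero_of_degree_lt
        refine lt_of_le_of_lt (Polynomial.degree_mul_le_of_le (Polynomial.degree_C_mul_X_pow_le m t) hGdeg) ?_
        calc ((m : WithBot ℕ) + N) = ((m + N : ℕ) : WithBot ℕ) := by push_cast; ring
          _ < (m' : WithBot ℕ) := by rw [hmN]; exact_mod_cast hgt
      rw [h1, h2, sub_zero]

theorem ritt_degree_divides
    (A C D B : Polynomial ℂ) (hA : 1 ≤ A.natDegree) (hC : 1 ≤ C.natDegree)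
    (hD : 1 ≤ D.natDegree) (hB : 1 ≤ B.natDegree)
    (h : A.comp C = D.comp B) (hdiv : D.natDegree ∣ A.natDegree) :
    ∃ R : Polynomial ℂ, A = D.comp R ∧ B = R.comp C := by
  obtain ⟨k, hk⟩ := hdiv
  set d := D.natDegree with hdd
  set c := C.natDegree with hcc
  have hA0 : A ≠ 0 := fun h0 => by rw [h0, Polynomial.natDegree_zero] at hA; omega
  have hB0 : B ≠ 0 := fun h0 => by rw [h0, Polynomial.natDegree_zero] at hB; omega
  have hC0 : C ≠ 0 := fun h0 => by rw [h0, Polynomial.natDegree_zero] at hcc; omega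
  have hD0 : D ≠ 0 := fun h0 => by rw [h0, Polynomial.natDegree_zero] at hdd; omega
  have hk1 : 1 ≤ k := by
    rcases Nat.eq_zero_or_pos k with h0 | h0
    · rw [h0, mul_zero] at hk; omega
    · exact h0
  -- degrees
  have hdegs : A.natDegree * c = d * B.natDegree := by
    have := congrArg Polynomial.natDegree h
    rwa [Polynomial.natDegree_comp, Polynomial.natDegree_comp] at this
  have hb : B.natDegree = k * c := by
    have : d * (k * c) = d * B.natDegree := by rw [← mul_assoc, ← hk]; exact hdegs
    exact (Nat.eq_of_mul_eq_mul_left (by omega) this).symm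
  -- leading coefficients
  set lam := C.leadingCoeff with hlam
  set β := B.leadingCoeff with hβ
  have hlam0 : lam ≠ 0 := Polynomial.leadingCoeff_ne_zero.mpr hC0
  have hβ0 : β ≠ 0 := Polynomial.leadingCoeff_ne_zero.mpr hB0
  set ρ := β / lam ^ k with hρdef
  have hρ0 : ρ ≠ 0 := div_ne_zero hβ0 (pow_ne_zero _ hlam0)
  have hlc : A.leadingCoeff * lam ^ A.natDegree = D.leadingCoeff * β ^ d := by
    have := congrArg Polynomial.leadingCoeff h
    rwa [Polynomial.leadingCoeff_comp (by omega : C.natDegree ≠ 0),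
      Polynomial.leadingCoeff_comp (by omega : B.natDegree ≠ 0)] at this
  have hρ : D.leadingCoeff * ρ ^ d = A.leadingCoeff := by
    rw [hρdef, div_pow, ← pow_mul]
    field_simp
    rw [mul_comm k d, ← hk]
    linear_combination -hlc
  -- get approximate root
  obtain ⟨R, hRdeg, hRlc, hRlt⟩ := approx_root D A k hk1 hD hA0 ρ hρ hk k (le_refl k)
  have hR0 : R ≠ 0 := fun h0 => by
    rw [h0, Polynomial.leadingCoeff_zero] at hRlc; exact hρ0 hRlc.symm
  set E := A - D.comp R with hE
  -- R ∘ C data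
  have hRC0 : R.comp C ≠ 0 := fun h0 => by
    have hlcc := Polynomial.leadingCoeff_comp (p := R) (q := C) (by omega : C.natDegree ≠ 0)
    rw [h0, Polynomial.leadingCoeff_zero] at hlcc
    exact (mul_ne_zero (Polynomial.leadingCoeff_ne_zero.mpr hR0)
      (pow_ne_zero _ hlam0)) hlcc.symm
  have hRCdeg : (R.comp C).natDegree = k * c := by rw [Polynomial.natDegree_comp, hRdeg]
  have hRClc : (R.comp C).leadingCoeff = β := by
    rw [Polynomial.leadingCoeff_comp (by omega : C.natDegree ≠ 0), hRlc, hRdeg, hρdef,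
      div_mul_cancel₀ _ (pow_ne_zero _ hlam0)]
  -- E.comp C = (B - R.comp C) * G
  set G := auxG D B (R.comp C) with hG
  have hEC : E.comp C = (B - R.comp C) * G := by
    rw [hE, Polynomial.sub_comp, h, Polynomial.comp_assoc, comp_sub_comp]
  have hkc1 : 1 ≤ k * c := by
    calc 1 ≤ k := hk1
    _ ≤ k * c := Nat.le_mul_of_pos_right k (by omega)
  have hGc : G.coeff ((d - 1) * (k * c)) = D.leadingCoeff * d * β ^ (d - 1) :=
    auxG_coeff D B (R.comp C) (k * c) hkc1 hD β hb hRCdeg rfl hRClc hB0 hRC0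
  have hGc0 : G.coeff ((d - 1) * (k * c)) ≠ 0 := by
    rw [hGc]
    exact mul_ne_zero (mul_ne_zero (Polynomial.leadingCoeff_ne_zero.mpr hD0)
      (Nat.cast_ne_zero.mpr (by omega))) (pow_ne_zero _ hβ0)
  have hG0 : G ≠ 0 := fun h0 => by rw [h0, Polynomial.coeff_zero] at hGc0; exact hGc0 rfl
  have hGdegge : (((d - 1) * (k * c) : ℕ) : WithBot ℕ) ≤ G.degree :=
    Polynomial.le_degree_of_ne_zero hGc0
  -- show E = 0
  have hE0 : E = 0 := by
    by_contra hE0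
    have hEC0 : E.comp C ≠ 0 := fun h0 => by
      have := Polynomial.leadingCoeff_comp (p := E) (by omega : C.natDegree ≠ 0)
      rw [h0, Polynomial.leadingCoeff_zero] at this
      exact mul_ne_zero (Polynomial.leadingCoeff_ne_zero.mpr hE0)
        (pow_ne_zero _ hlam0) this.symm
    have hBRC0 : B - R.comp C ≠ 0 := fun h0 => by rw [hEC, h0, zero_mul] at hEC0; exact hEC0 rfl
    -- degree lower bound
    have hlow : (((d - 1) * (k * c) : ℕ) : WithBot ℕ) ≤ (E.comp C).degree := by
      rw [hEC, Polynomial.degree_mul]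
      calc (((d - 1) * (k * c) : ℕ) : WithBot ℕ) ≤ G.degree := hGdegge
      _ ≤ (B - R.comp C).degree + G.degree := by
          rw [Polynomial.degree_eq_natDegree hBRC0]
          exact le_add_of_nonneg_left (by exact_mod_cast Nat.zero_le _)
    -- degree upper bound
    have hEnd : E.natDegree < (d - 1) * k := by
      have h1 : E.degree < ((d * k - k : ℕ) : WithBot ℕ) := hRlt
      have h2 : (E.natDegree : WithBot ℕ) < ((d * k - k : ℕ) : WithBot ℕ) := by
        rw [← Polynomial.degree_eq_natDegree hE0]; exact h1
      have h3 : E.natDegree < d * k - k := by exact_mod_cast h2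
      have : (d - 1) * k = d * k - k := by rw [Nat.sub_mul, one_mul]
      omega
    have hup : (E.comp C).degree = ((E.natDegree * c : ℕ) : WithBot ℕ) := by
      have hEC0' : E.comp C ≠ 0 := hEC0
      rw [Polynomial.degree_eq_natDegree hEC0', Polynomial.natDegree_comp]
    rw [hup] at hlow
    have hle : (d - 1) * (k * c) ≤ E.natDegree * c := by exact_mod_cast hlow
    have : (d - 1) * k ≤ E.natDegree := by
      have h4 : ((d - 1) * k) * c ≤ E.natDegree * c := by rw [mul_assoc]; exact hle
      exact Nat.le_of_mul_le_mul_right h4 (by omega)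
    omega
  -- conclude
  have hAeq : A = D.comp R := by
    have : A - D.comp R = 0 := hE0
    linear_combination this
  refine ⟨R, hAeq, ?_⟩
  have hECzero : (B - R.comp C) * G = 0 := by rw [← hEC, hE0, Polynomial.zero_comp]
  rcases mul_eq_zero.mp hECzero with h1 | h1
  · have : B - R.comp C = 0 := h1
    linear_combination this
  · exact absurd h1 hG0
end

section
/- Let m, n be natural numbers with m ≥ 1 and n ≥ 2 such that every prime dividing m also divides n. Then m divides n^⌊log₂ m⌋. -/
theorem dvd_pow_log_of_primes_dvd
    (m n : ℕ) (hm : 1 ≤ m) (hn : 2 ≤ n)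
    (h : ∀ p : ℕ, p.Prime → p ∣ m → p ∣ n) :
    m ∣ n ^ Nat.log 2 m := by
  have hm0 : m ≠ 0 := by omega
  have hn0 : n ≠ 0 := by omega
  have hnk : n ^ Nat.log 2 m ≠ 0 := pow_ne_zero _ hn0
  rw [← Nat.factorization_le_iff_dvd hm0 hnk]
  intro p
  by_cases hp : p.Prime
  · by_cases hpm : p ∣ m
    · have hpn : p ∣ n := h p hp hpm
      have h1 : 1 ≤ n.factorization p :=
        (Nat.Prime.factorization_pos_of_dvd hp hn0 hpn)
      have h2 : m.factorization p ≤ Nat.log 2 m := by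
        rw [Nat.le_log_iff_pow_le (by norm_num) hm0]
        calc 2 ^ m.factorization p ≤ p ^ m.factorization p :=
              Nat.pow_le_pow_left hp.two_le _
          _ ≤ m := Nat.le_of_dvd (by omega) (Nat.ordProj_dvd m p)
      rw [Nat.factorization_pow]
      simp only [Finsupp.coe_smul, Pi.smul_apply, smul_eq_mul]
      calc m.factorization p ≤ Nat.log 2 m := h2
        _ ≤ Nat.log 2 m * n.factorization p := Nat.le_mul_of_pos_right _ h1
    · simp [Nat.factorization_eq_zero_of_not_dvd hpm]
  · simp [Nat.factorization_eq_zero_of_not_prime _ hp]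
end

section
/- Let m ≥ 3 be an integer, let μ and ν be polynomials of degree one over ℂ, let ε, δ ∈ {1, −1}, and set B = ε·(T_m∘μ). If B∘B = δ·(T_{m²}∘ν), then μ = z or μ = −z. -/
open Polynomial Complex


-- Pell identity for Chebyshev polynomials over ℂ
lemma cheb_pell (n : ℤ) :
    (Polynomial.Chebyshev.T ℂ n) ^ 2 - 1 =
      (X ^ 2 - 1) * (Polynomial.Chebyshev.U ℂ (n - 1)) ^ 2 := by
  apply Polynomial.funext
  intro z
  obtain ⟨θ, rfl⟩ := Complex.cos_surjective z
  have hT := Polynomial.Chebyshev.T_complex_cos θ n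
  have hU := Polynomial.Chebyshev.U_complex_cos θ (n - 1)
  have hcast : ((n - 1 : ℤ) : ℂ) + 1 = (n : ℂ) := by push_cast; ring
  rw [hcast] at hU
  have pyth1 := Complex.sin_sq_add_cos_sq θ
  have pyth2 := Complex.sin_sq_add_cos_sq ((n : ℂ) * θ)
  simp only [eval_mul, eval_sub, eval_pow, eval_one, eval_X, hT]
  linear_combination pyth2 -
    (eval (Complex.cos θ) (Polynomial.Chebyshev.U ℂ (n - 1)))^2 * pyth1 +
    (eval (Complex.cos θ) (Polynomial.Chebyshev.U ℂ (n - 1)) * Complex.sin θ +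
      Complex.sin ((n:ℂ) * θ)) * hU

lemma cheb_U_eval (m : ℕ) (θr : ℝ) :
    (Polynomial.Chebyshev.U ℂ ((m : ℤ) - 1)).eval (Complex.cos (θr : ℂ)) *
      ((Real.sin θr : ℝ) : ℂ) = ((Real.sin (m * θr) : ℝ) : ℂ) := by
  have hU := Polynomial.Chebyshev.U_complex_cos (θr : ℂ) ((m : ℤ) - 1)
  have hcast : (((m : ℤ) - 1 : ℤ) : ℂ) + 1 = (m : ℂ) := by push_cast; ring
  rw [hcast] at hU
  have h1 : (m : ℂ) * (θr : ℂ) = ((m * θr : ℝ) : ℂ) := by push_cast; ring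
  rw [h1, ← Complex.ofReal_sin, ← Complex.ofReal_sin] at hU
  exact hU

-- U ℂ (k-1) is nonzero for k ≥ 1
lemma cheb_U_ne_zero (k : ℕ) (hk : 0 < k) :
    Polynomial.Chebyshev.U ℂ ((k : ℤ) - 1) ≠ 0 := by
  intro h0
  have hU := cheb_U_eval k (Real.pi / (2 * k))
  rw [h0] at hU
  have h2 : (k : ℝ) * (Real.pi / (2 * k)) = Real.pi / 2 := by
    field_simp
  rw [h2, Real.sin_pi_div_two] at hU
  simp at hU

-- vanishing of U at interior cos points
lemma cheb_U_eval_zero (m j : ℕ) (hj0 : 0 < j) (hjm : j < m) :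
    (Polynomial.Chebyshev.U ℂ ((m : ℤ) - 1)).eval
      (Complex.cos ((j * Real.pi / m : ℝ) : ℂ)) = 0 := by
  have hm : 0 < m := lt_trans hj0 hjm
  have hU := cheb_U_eval m (j * Real.pi / m)
  have h1 : (m : ℝ) * (j * Real.pi / m) = j * Real.pi := by
    field_simp
  rw [h1] at hU
  have h2 : Real.sin (j * Real.pi) = 0 := by
    simpa using Real.sin_int_mul_pi (j : ℤ)
  rw [h2] at hU
  have hsne : Real.sin (j * Real.pi / m) ≠ 0 := by
    have : 0 < Real.sin (j * Real.pi / m) := by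
      apply Real.sin_pos_of_pos_of_lt_pi
      · positivity
      · rw [div_lt_iff₀ (by positivity)]
        calc (j : ℝ) * Real.pi < m * Real.pi := by
              apply mul_lt_mul_of_pos_right _ Real.pi_pos
              exact_mod_cast hjm
          _ = Real.pi * m := by ring
    exact this.ne'
  rw [Complex.ofReal_zero] at hU
  rcases mul_eq_zero.mp hU with h | h
  · exact h
  · exact absurd (by exact_mod_cast h) hsne


theorem chebyshev_square_conjugacy
    (m : ℕ) (hm : 3 ≤ m) (μ ν : Polynomial ℂ)
    (hμ : μ.degree = 1) (hν : ν.degree = 1)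
    (ε δ : ℂ) (hε : ε = 1 ∨ ε = -1) (hδ : δ = 1 ∨ δ = -1)
    (B : Polynomial ℂ)
    (hB : B = ε • ((Polynomial.Chebyshev.T ℂ (m : ℤ)).comp μ))
    (h : B.comp B = δ • ((Polynomial.Chebyshev.T ℂ ((m : ℤ) ^ 2)).comp ν)) :
    μ = Polynomial.X ∨ μ = -Polynomial.X := by
  have hε2 : ε * ε = 1 := by rcases hε with rfl | rfl <;> norm_num
  have hδ2 : δ * δ = 1 := by rcases hδ with rfl | rfl <;> norm_num
  have hεne : ε ≠ 0 := by rcases hε with rfl | rfl <;> norm_num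
  have hmne : ((m : ℕ) : ℂ) ≠ 0 := Nat.cast_ne_zero.mpr (by omega)
  set a := μ.coeff 1 with ha_def
  set b := μ.coeff 0 with hb_def
  have ha : a ≠ 0 := coeff_ne_zero_of_eq_degree hμ
  have hμeq : μ = C a * X + C b := eq_X_add_C_of_degree_le_one hμ.le
  set c := ν.coeff 1 with hc_def
  have hc : c ≠ 0 := coeff_ne_zero_of_eq_degree hν
  have hdμ : derivative μ = C a := by rw [hμeq]; simp
  have hdν : derivative ν = C c := by
    rw [eq_X_add_C_of_degree_le_one hν.le]; simp; rfl
  set T1 := Polynomial.Chebyshev.T ℂ (m : ℤ) with hT1def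
  set T2 := Polynomial.Chebyshev.T ℂ ((m : ℤ) ^ 2) with hT2def
  set U1 := Polynomial.Chebyshev.U ℂ ((m : ℤ) - 1) with hU1def
  set U2 := Polynomial.Chebyshev.U ℂ ((m : ℤ) ^ 2 - 1) with hU2def
  set w := μ.comp B with hwdef
  have hU1ne : U1 ≠ 0 := cheb_U_ne_zero m (by omega)
  have hCε : C ε * C ε = (1 : ℂ[X]) := by rw [← C_mul, hε2, C_1]
  have hCδ : C δ * C δ = (1 : ℂ[X]) := by rw [← C_mul, hδ2, C_1]
  -- derivatives of Chebyshev T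
  have hdT1 : derivative T1 = ((m : ℕ) : ℂ[X]) * U1 := by
    rw [hT1def, Polynomial.Chebyshev.T_derivative_eq_U]
    push_cast
    rfl
  have hdT2 : derivative T2 = ((m : ℕ) : ℂ[X]) ^ 2 * U2 := by
    rw [hT2def, Polynomial.Chebyshev.T_derivative_eq_U]
    push_cast
    rfl
  -- derivative of B
  have hderB : derivative B = C ε * ((m : ℕ) : ℂ[X]) * C a * (U1.comp μ) := by
    rw [hB, derivative_smul, derivative_comp, hdμ, hdT1, smul_eq_C_mul]
    simp only [mul_comp, natCast_comp]
    ring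
  have hBB : B.comp B = ε • (T1.comp w) := by
    rw [hB, smul_comp, comp_assoc, hwdef, hB]
  have hdw : derivative w = derivative B * C a := by
    rw [hwdef, derivative_comp, hdμ, C_comp]
  have hd1 : derivative (B.comp B) = ((m : ℕ) : ℂ[X]) ^ 2 * (C a) ^ 2 * (U1.comp μ) * (U1.comp w) := by
    rw [hBB, derivative_smul, derivative_comp, hdT1, hdw, hderB, smul_eq_C_mul]
    simp only [mul_comp, natCast_comp]
    linear_combination (C a * C a * ((m : ℕ) : ℂ[X])^2 * (U1.comp μ) * (U1.comp w)) * hCε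
  have hd2 : derivative (B.comp B) = C δ * ((m : ℕ) : ℂ[X]) ^ 2 * C c * (U2.comp ν) := by
    rw [h, derivative_smul, derivative_comp, hdν, hdT2, smul_eq_C_mul]
    simp only [mul_comp, natCast_comp, pow_comp]
    ring
  -- Pell consequences
  have hQ1 : (B.comp B) ^ 2 - 1 = (w ^ 2 - 1) * (U1.comp w) ^ 2 := by
    have hp := congrArg (fun p : ℂ[X] => p.comp w) (cheb_pell (m : ℤ))
    simp only [sub_comp, pow_comp, one_comp, mul_comp, X_comp] at hp
    rw [hBB, smul_eq_C_mul]
    rw [← hT1def, ← hU1def] at hp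
    linear_combination hp + ((T1.comp w) ^ 2) * hCε
  have hQ2 : (B.comp B) ^ 2 - 1 = (ν ^ 2 - 1) * (U2.comp ν) ^ 2 := by
    have hp := congrArg (fun p : ℂ[X] => p.comp ν) (cheb_pell ((m : ℤ) ^ 2))
    simp only [sub_comp, pow_comp, one_comp, mul_comp, X_comp] at hp
    rw [h, smul_eq_C_mul]
    rw [← hT2def, ← hU2def] at hp
    linear_combination hp + ((T2.comp ν) ^ 2) * hCδ
  -- nonvanishing of U1.comp w
  have hu1w : U1.comp w ≠ 0 := by
    intro h0
    rcases comp_eq_zero_iff.mp h0 with h1 | ⟨h1, h2⟩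
    · exact hU1ne h1
    · have hdw0 : derivative w = 0 := by rw [h2]; simp
      rw [hdw] at hdw0
      rcases mul_eq_zero.mp hdw0 with h3 | h3
      · rw [hderB] at h3
        rcases mul_eq_zero.mp h3 with h4 | h4
        · rcases mul_eq_zero.mp h4 with h5 | h5
          · rcases mul_eq_zero.mp h5 with h6 | h6
            · exact hεne (by simpa using h6)
            · exact hmne (by simpa using h6)
          · exact ha (by simpa using h5)
        · rcases comp_eq_zero_iff.mp h4 with h5 | ⟨h5, h6⟩
          · exact hU1ne h5
          · have hle := Polynomial.degree_C_le (a := μ.coeff 0)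
            rw [← h6, hμ] at hle
            norm_num at hle
      · exact ha (by simpa using h3)
  -- the key cancellation
  have hcan : (((m : ℕ) : ℂ[X]) ^ 4 * (C a) ^ 4 * (U1.comp μ) ^ 2 * (ν ^ 2 - 1)) * (U1.comp w) ^ 2
      = (((m : ℕ) : ℂ[X]) ^ 4 * (C c) ^ 2 * (w ^ 2 - 1)) * (U1.comp w) ^ 2 := by
    have e : ((m : ℕ) : ℂ[X]) ^ 2 * (C a) ^ 2 * (U1.comp μ) * (U1.comp w)
        = C δ * ((m : ℕ) : ℂ[X]) ^ 2 * C c * (U2.comp ν) := hd1.symm.trans hd2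
    linear_combination (ν ^ 2 - 1) *
        (((m : ℕ) : ℂ[X]) ^ 2 * (C a) ^ 2 * (U1.comp μ) * (U1.comp w)
          + C δ * ((m : ℕ) : ℂ[X]) ^ 2 * C c * (U2.comp ν)) * e
      + (((m : ℕ) : ℂ[X]) ^ 4 * (C c) ^ 2 * (U2.comp ν) ^ 2 * (ν ^ 2 - 1)) * hCδ
      + (((m : ℕ) : ℂ[X]) ^ 4 * (C c) ^ 2) * hQ1 - (((m : ℕ) : ℂ[X]) ^ 4 * (C c) ^ 2) * hQ2
  have key : ((m : ℕ) : ℂ[X]) ^ 4 * (C a) ^ 4 * (U1.comp μ) ^ 2 * (ν ^ 2 - 1)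
      = ((m : ℕ) : ℂ[X]) ^ 4 * (C c) ^ 2 * (w ^ 2 - 1) :=
    mul_right_cancel₀ (pow_ne_zero 2 hu1w) hcan
  -- evaluate at the two special points
  have hevμ : ∀ x : ℂ, μ.eval x = a * x + b := by
    intro x; rw [hμeq]; simp
  have main : ∀ j : ℕ, 0 < j → j < m →
      (μ.eval (ε * Complex.cos (((j * Real.pi : ℝ)) : ℂ))) ^ 2 = 1 := by
    intro j hj0 hjm
    set θ : ℝ := j * Real.pi / m with hθdef
    set x : ℂ := Complex.cos (θ : ℂ) with hxdef
    set p : ℂ := (x - b) / a with hpdef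
    have hμp : μ.eval p = x := by
      rw [hevμ, hpdef]; field_simp; ring
    have hU1x : U1.eval x = 0 := cheb_U_eval_zero m j hj0 hjm
    have hT1x : T1.eval x = Complex.cos (((j * Real.pi : ℝ)) : ℂ) := by
      rw [hT1def, hxdef, Polynomial.Chebyshev.T_complex_cos]
      rw [hθdef]
      congr 1
      push_cast
      field_simp
    have hBp : B.eval p = ε * Complex.cos (((j * Real.pi : ℝ)) : ℂ) := by
      rw [hB, eval_smul, eval_comp, hμp, hT1x, smul_eq_mul]
    have ek := congrArg (eval p) key
    simp only [eval_mul, eval_pow, eval_sub, eval_comp, eval_C, eval_one, eval_natCast,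
      hμp, hU1x, hwdef, hBp] at ek
    have : ((m : ℂ)) ^ 4 * c ^ 2 * ((μ.eval (ε * Complex.cos (((j * Real.pi : ℝ)) : ℂ))) ^ 2 - 1) = 0 := by
      linear_combination - ek
    rcases mul_eq_zero.mp this with h1 | h1
    · rcases mul_eq_zero.mp h1 with h2 | h2
      · exact absurd h2 (pow_ne_zero 4 hmne)
      · exact absurd h2 (pow_ne_zero 2 hc)
    · linear_combination h1
  have E1 : (μ.eval (-ε)) ^ 2 = 1 := by
    have hmain := main 1 one_pos (by omega)
    rw [show (((1:ℕ):ℝ) * Real.pi) = Real.pi by norm_num] at hmain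
    have hcos : Complex.cos ((Real.pi : ℝ) : ℂ) = -1 := by
      rw [← Complex.ofReal_cos]
      norm_num
    rw [hcos] at hmain
    simpa [mul_neg_one] using hmain
  have E2 : (μ.eval ε) ^ 2 = 1 := by
    have hmain := main 2 (by omega) (by omega)
    rw [show (((2:ℕ):ℝ) * Real.pi) = 2 * Real.pi by norm_num] at hmain
    have hcos : Complex.cos ((2 * Real.pi : ℝ) : ℂ) = 1 := by
      rw [← Complex.ofReal_cos]
      norm_num [Real.cos_two_pi]
    rw [hcos] at hmain
    simpa using hmain
  rw [hevμ] at E1 E2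
  have hb0 : b = 0 := by
    have h4 : (4 * ε * a) * b = 0 := by linear_combination E2 - E1
    have h5 : (4 * ε * a) ≠ 0 := by
      apply mul_ne_zero (mul_ne_zero _ hεne) ha
      norm_num
    exact (mul_eq_zero.mp h4).resolve_left h5
  have ha2 : (a - 1) * (a + 1) = 0 := by
    rw [hb0] at E2
    linear_combination E2 - a ^ 2 * hε2
  rcases mul_eq_zero.mp ha2 with h1 | h1
  · left
    rw [hμeq, hb0, sub_eq_zero.mp h1]
    simp
  · right
    rw [hμeq, hb0, eq_neg_of_add_eq_zero_left h1]
    simp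
end
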